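/- Let n ≥ 1, p, q ∈ [0,1], y ∈ {0,1}^n, P ∈ [0,1]^n, and set T(y)_x = ∏_{l=1}^n [ y_l·(p·x_l + (1−q)·(1−x_l)) + (1−y_l)·(q·(1−x_l) + (1−p)·x_l) ]. Assume Σ_{x∈{0,1}^n} T(y)_x · Π*(P)_x ≠ 0. Then for every node r ∈ {1,…,n}: ( Σ_{x∈{0,1}^n} x_r · T(y)_x · Π*(P)_x ) / ( Σ_{x∈{0,1}^n} T(y)_x · Π*(P)_x ) = ( p·y_r·P_r + (1−y_r)·(1−p)·P_r ) / ( y_r·(p·P_r + (1−q)·(1−P_r)) + (1−y_r)·((1−p)·P_r + q·(1−P_r)) ). -/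
import Mathlib

open Finset

/-- Interpret a Boolean state coordinate as a real number (1 = compromised, 0 = secure). -/
def bToR (v : Bool) : ℝ := if v then 1 else 0

/-- The product distribution `Π*(P)` on `{0,1}^n` induced by the marginal vector `P`:
`Π*(P)_x = ∏_l (P_l·x_l + (1−P_l)·(1−x_l))`. -/
noncomputable def piStar {n : ℕ} (P : Fin n → ℝ) (x : Fin n → Bool) : ℝ :=
  ∏ l, (P l * bToR (x l) + (1 - P l) * (1 - bToR (x l)))

/-- The observation likelihood vector `T(y)` with true-positive probability `p` and
true-negative probability `q`:
`T(y)_x = ∏_l [ y_l·(p·x_l + (1−q)·(1−x_l)) + (1−y_l)·(q·(1−x_l) + (1−p)·x_l) ]`. -/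
noncomputable def Tlike {n : ℕ} (p q : ℝ) (y : Fin n → Bool) (x : Fin n → Bool) : ℝ :=
  ∏ l, (bToR (y l) * (p * bToR (x l) + (1 - q) * (1 - bToR (x l))) +
    (1 - bToR (y l)) * (q * (1 - bToR (x l)) + (1 - p) * bToR (x l)))

/-- Theorem 3, BKF observation update equals the MFA Bayes update:
if the normalizing constant `T(y)ᵀ Π*(P)` is nonzero, then the `r`-th posterior
marginal `(X (T(y) ∘ Π*(P)) / (T(y)ᵀ Π*(P)))_r` equals the single-node Bayes update. -/
theorem XTPiStar_eq_Bayes {n : ℕ} (hn : 1 ≤ n) (p q : ℝ)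
    (hp : p ∈ Set.Icc (0 : ℝ) 1) (hq : q ∈ Set.Icc (0 : ℝ) 1)
    (y : Fin n → Bool) (P : Fin n → ℝ) (hP : ∀ l, P l ∈ Set.Icc (0 : ℝ) 1)
    (hden : ∑ x : Fin n → Bool, Tlike p q y x * piStar P x ≠ 0)
    (r : Fin n) :
    (∑ x : Fin n → Bool, bToR (x r) * Tlike p q y x * piStar P x) /
        (∑ x : Fin n → Bool, Tlike p q y x * piStar P x) =
      (p * bToR (y r) * P r + (1 - bToR (y r)) * (1 - p) * P r) /
        (bToR (y r) * (p * P r + (1 - q) * (1 - P r)) +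
          (1 - bToR (y r)) * ((1 - p) * P r + q * (1 - P r))) := by
  classical
  set g : Fin n → Bool → ℝ := fun l b =>
    (bToR (y l) * (p * bToR b + (1 - q) * (1 - bToR b)) +
      (1 - bToR (y l)) * (q * (1 - bToR b) + (1 - p) * bToR b)) *
    (P l * bToR b + (1 - P l) * (1 - bToR b)) with hg
  set h : Fin n → Bool → ℝ := fun l b => (if l = r then bToR b else 1) * g l b with hh
  have hTP : ∀ x : Fin n → Bool, Tlike p q y x * piStar P x = ∏ l, g l (x l) := by
    intro x
    rw [Tlike, piStar, ← Finset.prod_mul_distrib]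
  have hnum : ∀ x : Fin n → Bool,
      bToR (x r) * Tlike p q y x * piStar P x = ∏ l, h l (x l) := by
    intro x
    rw [mul_assoc, hTP x, hh]
    simp only [Finset.prod_mul_distrib]
    congr 1
    rw [Finset.prod_ite_eq' Finset.univ r (fun l => bToR (x l))]
    simp
  have hden' : (∑ x : Fin n → Bool, Tlike p q y x * piStar P x)
      = ∏ l, ∑ b, g l b := by
    simp_rw [hTP]; rw [← Fintype.prod_sum]
  have hnum' : (∑ x : Fin n → Bool, bToR (x r) * Tlike p q y x * piStar P x)
      = ∏ l, ∑ b, h l b := by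
    simp_rw [hnum]; rw [← Fintype.prod_sum]
  -- split off factor r
  have hden2 : (∏ l, ∑ b, g l b) = (∑ b, g r b) * ∏ l ∈ Finset.univ.erase r, ∑ b, g l b := by
    rw [← Finset.mul_prod_erase Finset.univ _ (Finset.mem_univ r)]
  have hnum2 : (∏ l, ∑ b, h l b) = (∑ b, h r b) * ∏ l ∈ Finset.univ.erase r, ∑ b, h l b := by
    rw [← Finset.mul_prod_erase Finset.univ _ (Finset.mem_univ r)]
  have hoff : ∀ l ∈ Finset.univ.erase r, (∑ b, h l b) = ∑ b, g l b := by
    intro l hl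
    have : l ≠ r := Finset.ne_of_mem_erase hl
    simp [hh, this]
  have hC : (∏ l ∈ Finset.univ.erase r, ∑ b, h l b)
      = ∏ l ∈ Finset.univ.erase r, ∑ b, g l b := Finset.prod_congr rfl hoff
  have hhr : (∑ b, h r b) = g r true := by
    rw [Fintype.sum_bool]; simp [hh, bToR]
  set C : ℝ := ∏ l ∈ Finset.univ.erase r, ∑ b, g l b with hCdef
  have hCne : C ≠ 0 := by
    intro h0
    apply hden
    rw [hden', hden2, h0, mul_zero]
  have hDne : (∑ b, g r b) ≠ 0 := by
    intro h0
    apply hden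
    rw [hden', hden2, h0, zero_mul]
  rw [hnum', hden', hnum2, hden2, hC, hhr,
    mul_div_mul_right _ _ hCne]
  have e1 : g r true = p * bToR (y r) * P r + (1 - bToR (y r)) * (1 - p) * P r := by
    rcases hyr : y r <;> simp [hg, bToR, hyr] <;> ring
  have e2 : (∑ b, g r b) =
      bToR (y r) * (p * P r + (1 - q) * (1 - P r)) +
        (1 - bToR (y r)) * ((1 - p) * P r + q * (1 - P r)) := by
    rw [Fintype.sum_bool]; rcases hyr : y r <;> simp [hg, bToR, hyr] <;> ring
  rw [e1, e2]
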